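/- Let F be a field, let G be a finite group with trivial center, and let 𝒳 : G → GL_n(F) be a faithful irreducible F-representation of G. Let N = N_{GL_n(F)}(𝒳(G)) be the normalizer and Z = C_{GL_n(F)}(𝒳(G)) the centralizer of 𝒳(G) in GL_n(F). Then N/Z is isomorphic to the inertia subgroup I = { σ ∈ Aut(G) : the representation 𝒳∘σ is equivalent to 𝒳 } of Aut(G). -/

import Mathlib

open scoped MatrixGroups

/-- The inertia subgroup of `Aut(G)` of a matrix representation `𝒳` of `G`:
those automorphisms `σ` for which the twisted representation `𝒳 ∘ σ` is equivalent to `𝒳`. -/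
def inertia {F : Type} [Field F] {n : ℕ} {G : Type} [Group G]
    (𝒳 : G →* GL (Fin n) F) : Subgroup (MulAut G) where
  carrier := {σ | ∃ P : GL (Fin n) F, ∀ g : G, 𝒳 (σ g) = P * 𝒳 g * P⁻¹}
  one_mem' := ⟨1, fun g => by simp⟩
  mul_mem' := by
    rintro σ τ ⟨P, hP⟩ ⟨Q, hQ⟩
    refine ⟨P * Q, fun g => ?_⟩
    have h1 : (σ * τ) g = σ (τ g) := rfl
    rw [h1, hP (τ g), hQ g, mul_inv_rev]
    group
  inv_mem' := by
    rintro σ ⟨P, hP⟩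
    refine ⟨P⁻¹, fun g => ?_⟩
    have h1 : σ (σ⁻¹ g) = g := by
      simp [MulAut.inv_def]
    have h2 := hP (σ⁻¹ g)
    rw [h1] at h2
    rw [h2]
    group

section Aux

variable {F : Type} [Field F] {n : ℕ} {G : Type} [Group G]
  (𝒳 : G →* GL (Fin n) F) (hfaithful : Function.Injective 𝒳)

/-- The conjugation endomorphism of `G` induced by a normalizer element. -/
noncomputable def conjAut (P : GL (Fin n) F) (hP : P ∈ (Subgroup.normalizer (𝒳.range : Set (GL (Fin n) F)))) : G →* G where
  toFun g := (MonoidHom.ofInjective hfaithful).symm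
    ⟨P * 𝒳 g * P⁻¹, (Subgroup.mem_normalizer_iff.mp hP (𝒳 g)).mp ⟨g, rfl⟩⟩
  map_one' := by
    apply hfaithful
    rw [MonoidHom.apply_ofInjective_symm]
    simp
  map_mul' g h := by
    apply hfaithful
    rw [map_mul 𝒳 ((MonoidHom.ofInjective hfaithful).symm _) ((MonoidHom.ofInjective hfaithful).symm _), MonoidHom.apply_ofInjective_symm, MonoidHom.apply_ofInjective_symm,
      MonoidHom.apply_ofInjective_symm]
    show P * 𝒳 (g * h) * P⁻¹ = (P * 𝒳 g * P⁻¹) * (P * 𝒳 h * P⁻¹)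
    rw [map_mul 𝒳 g h]
    group

theorem conjAut_key (P : GL (Fin n) F) (hP : P ∈ (Subgroup.normalizer (𝒳.range : Set (GL (Fin n) F)))) (g : G) :
    𝒳 (conjAut 𝒳 hfaithful P hP g) = P * 𝒳 g * P⁻¹ :=
  MonoidHom.apply_ofInjective_symm hfaithful _

end Aux

/-- Let `F` be a field, `G` a finite group with trivial centre, and
`𝒳 : G → GL_n(F)` a faithful irreducible `F`-representation of `G`.  Let
`N = N_{GL_n(F)}(𝒳(G))` and `Z = C_{GL_n(F)}(𝒳(G))`.  Then `N/Z` is isomorphic to the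
inertia subgroup `I = {σ ∈ Aut(G) : 𝒳 ∘ σ ∼ 𝒳}` of `Aut(G)` (expressed here by a surjective
homomorphism `N → I` with kernel `Z`). -/
theorem stmt4 (F : Type) [Field F] (n : ℕ) (G : Type) [Group G] [Finite G]
    (hZ : Subgroup.center G = ⊥)
    (𝒳 : G →* GL (Fin n) F) (hfaithful : Function.Injective 𝒳)
    (hirr : ∀ W : Submodule F (Fin n → F),
      (∀ (g : G) (w : Fin n → F), w ∈ W → ((𝒳 g : Matrix (Fin n) (Fin n) F)).mulVec w ∈ W) →
      W = ⊥ ∨ W = ⊤) :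
    ∃ f : ↥((Subgroup.normalizer (𝒳.range : Set (GL (Fin n) F)))) →* ↥(inertia 𝒳),
      Function.Surjective f ∧
        f.ker = (Subgroup.centralizer (𝒳.range : Set (GL (Fin n) F))).subgroupOf
          (Subgroup.normalizer (𝒳.range : Set (GL (Fin n) F))) := by
  classical
  have key := conjAut_key 𝒳 hfaithful
  let A : ∀ P : ↥((Subgroup.normalizer (𝒳.range : Set (GL (Fin n) F)))), MulAut G := fun P =>
    MonoidHom.toMulEquiv (conjAut 𝒳 hfaithful P P.2)
      (conjAut 𝒳 hfaithful (P : GL (Fin n) F)⁻¹ (inv_mem P.2))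
      (by ext g
          simp only [MonoidHom.comp_apply, MonoidHom.id_apply]
          apply hfaithful
          rw [key, key]
          group)
      (by ext g
          simp only [MonoidHom.comp_apply, MonoidHom.id_apply]
          apply hfaithful
          rw [key, key]
          group)
  have hA : ∀ (P : ↥((Subgroup.normalizer (𝒳.range : Set (GL (Fin n) F))))) (g : G),
      𝒳 (A P g) = (P : GL (Fin n) F) * 𝒳 g * (P : GL (Fin n) F)⁻¹ := fun P g => key _ P.2 g
  have hAmem : ∀ P : ↥((Subgroup.normalizer (𝒳.range : Set (GL (Fin n) F)))), A P ∈ inertia 𝒳 := fun P =>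
    ⟨(P : GL (Fin n) F), hA P⟩
  refine ⟨{ toFun := fun P => ⟨A P, hAmem P⟩
            map_one' := ?_
            map_mul' := ?_ }, ?_, ?_⟩
  · ext g
    apply hfaithful
    rw [hA]
    simp
  · intro P Q
    ext g
    apply hfaithful
    show 𝒳 (A (P * Q) g) = 𝒳 (A P (A Q g))
    rw [hA, hA, hA]
    push_cast
    group
  · -- surjectivity
    rintro ⟨σ, P, hP⟩
    have hPmem : P ∈ (Subgroup.normalizer (𝒳.range : Set (GL (Fin n) F))) := by
      rw [Subgroup.mem_normalizer_iff]
      intro h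
      constructor
      · rintro ⟨g, rfl⟩
        exact ⟨σ g, hP g⟩
      · rintro ⟨g, hg⟩
        have h2 := hP (σ⁻¹ g)
        rw [show σ (σ⁻¹ g) = g by simp [MulAut.inv_def]] at h2
        refine ⟨σ⁻¹ g, ?_⟩
        have e1 : P * 𝒳 (σ⁻¹ g) * P⁻¹ = P * h * P⁻¹ := by rw [← h2, hg]
        exact mul_left_cancel (mul_right_cancel e1)
    refine ⟨⟨P, hPmem⟩, ?_⟩
    ext g
    show A ⟨P, hPmem⟩ g = σ g
    apply hfaithful
    rw [hA, hP]
  · -- kernel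
    ext P
    simp only [MonoidHom.mem_ker, Subgroup.mem_subgroupOf]
    constructor
    · intro h
      rw [Subgroup.mem_centralizer_iff]
      rintro x ⟨g, rfl⟩
      have hg : A P g = g := by
        have := congrArg (fun σ => (σ : MulAut G) g) (congrArg Subtype.val h)
        exact this
      have h1 := hA P g
      rw [hg] at h1
      exact (mul_inv_eq_iff_eq_mul.mp h1.symm).symm
    · intro h
      ext g
      show A P g = g
      apply hfaithful
      have h1 := Subgroup.mem_centralizer_iff.mp h (𝒳 g) ⟨g, rfl⟩
      rw [hA, ← h1, mul_inv_cancel_right]
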